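/- arXiv:2112.03646 — 3 statements merged into one kernel-verified Lean document; each statement's English description precedes it below -/
import Mathlib

section
/- Let R be a commutative ring, F a formal group law over R with formal inverse ι, and G ∈ R[[T]] the unique power series with X + ι(X) = G(X·ι(X)). Then the R[[U]]-algebra homomorphism R[[U]][T]/(T² − G(U)·T + U) → R[[X]] determined by sending U to X·ι(X) and T to X is well defined (since X² − G(X·ι(X))·X + X·ι(X) = 0) and is an isomorphism of R-algebras. In particular R[[X]] is a finite module over the image of R[[U]] under the substitution U ↦ X·ι(X). -/
noncomputable section

/-- The weight (total degree) of a multi-exponent. -/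
def wt {τ : Type*} (d : τ →₀ ℕ) : ℕ := d.sum fun _ e => e

/-- Substitution of a family of multivariate power series (each having zero constant
coefficient) into a multivariate power series in finitely many variables.  The coefficient
of the result in multidegree `d` is computed from a sufficiently large truncation of `f`;
this agrees with the usual substitution whenever every `a i` has zero constant coefficient. -/
def msubst {R : Type*} [CommRing R] {k : ℕ} {τ : Type*}
    (a : Fin k → MvPowerSeries τ R) (f : MvPowerSeries (Fin k) R) : MvPowerSeries τ R :=
  fun d => MvPowerSeries.coeff d
    (MvPolynomial.eval₂ (MvPowerSeries.C (σ := τ) (R := R)) a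
      (MvPowerSeries.trunc R (Finsupp.equivFunOnFinite.symm fun _ => wt d + 1) f))

/-- Substitution of a multivariate power series with zero constant coefficient into a
one-variable power series. -/
def psubst {R : Type*} [CommRing R] {τ : Type*}
    (a : MvPowerSeries τ R) (f : PowerSeries R) : MvPowerSeries τ R :=
  fun d => MvPowerSeries.coeff d
    (Polynomial.eval₂ (MvPowerSeries.C (σ := τ) (R := R)) a (PowerSeries.trunc (wt d + 1) f))

/-- A (one-dimensional, commutative) formal group law over `R`:
`F(X,0) = X`, `F(0,Y) = Y`, `F(X,Y) = F(Y,X)` and `F(F(X,Y),Z) = F(X,F(Y,Z))`. -/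
structure IsFGL {R : Type*} [CommRing R] (F : MvPowerSeries (Fin 2) R) : Prop where
  zero_right : msubst ![MvPowerSeries.X 0, 0] F = (MvPowerSeries.X 0 : MvPowerSeries (Fin 2) R)
  zero_left : msubst ![0, MvPowerSeries.X 1] F = (MvPowerSeries.X 1 : MvPowerSeries (Fin 2) R)
  comm : msubst ![MvPowerSeries.X 1, MvPowerSeries.X 0] F = F
  assoc : msubst ![msubst ![(MvPowerSeries.X 0 : MvPowerSeries (Fin 3) R), MvPowerSeries.X 1] F,
        MvPowerSeries.X 2] F
      = msubst ![(MvPowerSeries.X 0 : MvPowerSeries (Fin 3) R),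
        msubst ![MvPowerSeries.X 1, MvPowerSeries.X 2] F] F

/-- `ι` is the formal inverse of the formal group law `F`: it is composable and
`F(X, ι(X)) = 0` in `R[[X]]`. -/
def IsFormalInverse {R : Type*} [CommRing R] (F : MvPowerSeries (Fin 2) R)
    (ι : PowerSeries R) : Prop :=
  PowerSeries.constantCoeff ι = 0 ∧
    msubst ![(PowerSeries.X : PowerSeries R), ι] F = 0

end

noncomputable section StmtThreeAux

namespace StmtThreeAux

open PowerSeries

variable {R : Type*} [CommRing R] {τ : Type*}

/-! ### weights -/

theorem wt_add (d e : τ →₀ ℕ) : wt (d + e) = wt d + wt e := by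
  simp only [wt]
  exact Finsupp.sum_add_index' (fun _ => rfl) (fun _ _ _ => rfl)

theorem wt_eq_zero_iff {d : τ →₀ ℕ} : wt d = 0 ↔ d = 0 := by
  constructor
  · intro h
    ext i
    by_cases hi : i ∈ d.support
    · exact absurd (Finset.sum_eq_zero_iff.mp h i hi) (Finsupp.mem_support_iff.mp hi)
    · simpa using Finsupp.notMem_support_iff.mp hi
  · rintro rfl; simp [wt]

theorem wt_single (i : τ) (n : ℕ) : wt (Finsupp.single i n) = n := by
  simp [wt, Finsupp.sum_single_index]

theorem wt_eq_one {e : τ →₀ ℕ} (h : wt e = 1) : ∃ i, e = Finsupp.single i 1 := by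
  classical
  have hne : e.support.Nonempty := by
    rcases e.support.eq_empty_or_nonempty with h0 | h0
    · exfalso
      have : e = 0 := by ext i; simpa using Finsupp.notMem_support_iff.mp (by simp [h0])
      rw [this] at h; simp [wt] at h
    · exact h0
  obtain ⟨i, hi⟩ := hne
  have hsum : e.support.sum e = 1 := h
  have hei : 1 ≤ e i := Nat.one_le_iff_ne_zero.mpr (Finsupp.mem_support_iff.mp hi)
  have hsplit : e i + (e.support.erase i).sum e = 1 := by
    rw [Finset.add_sum_erase _ _ hi]; exact hsum
  have hei1 : e i = 1 := le_antisymm (by omega) hei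
  have hrest : (e.support.erase i).sum e = 0 := by omega
  have hsupp : e.support = {i} := by
    apply Finset.eq_singleton_iff_unique_mem.mpr
    refine ⟨hi, fun j hj => ?_⟩
    by_contra hji
    have : e j = 0 := Finset.sum_eq_zero_iff.mp hrest j (Finset.mem_erase.mpr ⟨hji, hj⟩)
    exact Finsupp.mem_support_iff.mp hj this
  obtain ⟨-, he⟩ := Finsupp.support_eq_singleton.mp hsupp
  exact ⟨i, by rw [he, hei1]⟩

/-! ### vanishing below a given weight -/

/-- vanishing below weight `m` -/
def V (f : MvPowerSeries τ R) (m : ℕ) : Prop :=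
  ∀ d, wt d < m → MvPowerSeries.coeff d f = 0

theorem V_of_constantCoeff {f : MvPowerSeries τ R}
    (h : MvPowerSeries.constantCoeff f = 0) : V f 1 := by
  intro d hd
  have : d = 0 := wt_eq_zero_iff.mp (by omega)
  rw [this]
  simpa using h

theorem V.mul {f g : MvPowerSeries τ R} {m n : ℕ} (hf : V f m) (hg : V g n) :
    V (f * g) (m + n) := by
  classical
  intro d hd
  rw [MvPowerSeries.coeff_mul]
  apply Finset.sum_eq_zero
  rintro ⟨p, q⟩ hpq
  have hpq' : p + q = d := by simpa using Finset.HasAntidiagonal.mem_antidiagonal.mp hpq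
  have hw : wt p + wt q = wt d := by rw [← wt_add, hpq']
  rcases lt_or_ge (wt p) m with h1 | h1
  · rw [hf p h1, zero_mul]
  · rw [hg q (by omega), mul_zero]

theorem V.pow {f : MvPowerSeries τ R} (hf : V f 1) (k : ℕ) : V (f ^ k) k := by
  induction k with
  | zero => intro d hd; omega
  | succ k ih =>
    rw [pow_succ]
    exact ih.mul hf

theorem V.prod {k : ℕ} {a : Fin k → MvPowerSeries τ R}
    (ha : ∀ i, MvPowerSeries.constantCoeff (a i) = 0) (e : Fin k →₀ ℕ)
    (s : Finset (Fin k)) :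
    V (∏ i ∈ s, a i ^ e i) (∑ i ∈ s, e i) := by
  classical
  induction s using Finset.induction with
  | empty =>
    intro d hd; simp at hd
  | insert _ _ hx ih =>
    rename_i x s
    rw [Finset.prod_insert hx, Finset.sum_insert hx]
    exact ((V_of_constantCoeff (ha x)).pow (e x)).mul ih

/-! ### weight-one coefficients of `msubst` -/

theorem coeff_msubst_wt_one (a : Fin 2 → MvPowerSeries τ R)
    (ha : ∀ i, MvPowerSeries.constantCoeff (a i) = 0)
    (F : MvPowerSeries (Fin 2) R) (d : τ →₀ ℕ) (hd : wt d = 1) :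
    MvPowerSeries.coeff d (msubst a F) =
      MvPowerSeries.coeff (Finsupp.single 0 1) F * MvPowerSeries.coeff d (a 0)
      + MvPowerSeries.coeff (Finsupp.single 1 1) F * MvPowerSeries.coeff d (a 1) := by
  classical
  have hd0 : d ≠ 0 := by
    intro h
    rw [h] at hd
    simp [wt] at hd
  set nf : Fin 2 →₀ ℕ := Finsupp.equivFunOnFinite.symm (fun _ => wt d + 1) with hnf
  set T : MvPolynomial (Fin 2) R := MvPowerSeries.trunc R nf F with hT
  set g : (Fin 2 →₀ ℕ) → R :=
    fun e => T.coeff e * MvPowerSeries.coeff d (∏ i ∈ e.support, a i ^ e i) with hg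
  have h1 : MvPowerSeries.coeff d (msubst a F) = ∑ e ∈ T.support, g e := by
    rw [MvPowerSeries.coeff_apply]
    simp only [msubst, ← hnf, ← hT]
    rw [MvPolynomial.eval₂_eq, map_sum]
    exact Finset.sum_congr rfl fun e _ => by rw [MvPowerSeries.coeff_C_mul]
  have hvan : ∀ e : Fin 2 →₀ ℕ, wt e ≠ 1 →
      MvPowerSeries.coeff d (∏ i ∈ e.support, a i ^ e i) = 0 := by
    intro e he
    rcases Nat.lt_or_ge (wt e) 1 with h | h
    · have : e = 0 := wt_eq_zero_iff.mp (by omega)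
      subst this
      simp [MvPowerSeries.coeff_one, hd0]
    · have h2 : 2 ≤ wt e := by omega
      have hw : (∑ i ∈ e.support, e i) = wt e := rfl
      have := V.prod ha e e.support d
      rw [hw] at this
      exact this (by omega)
  set P : Finset (Fin 2 →₀ ℕ) := {Finsupp.single 0 1, Finsupp.single 1 1} with hP
  have hsum : ∑ e ∈ T.support, g e = ∑ e ∈ P, g e := by
    have sub1 : T.support ∩ P ⊆ T.support := Finset.inter_subset_left
    have sub2 : T.support ∩ P ⊆ P := Finset.inter_subset_right
    rw [← Finset.sum_subset sub1, ← Finset.sum_subset sub2]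
    · intro e heP heI
      have heS : e ∉ T.support := fun h => heI (Finset.mem_inter.mpr ⟨h, heP⟩)
      have : T.coeff e = 0 := by simpa using MvPolynomial.notMem_support_iff.mp heS
      simp [hg, this]
    · intro e heS heI
      have heP : e ∉ P := fun h => heI (Finset.mem_inter.mpr ⟨heS, h⟩)
      have hwe : wt e ≠ 1 := by
        intro h
        obtain ⟨i, rfl⟩ := wt_eq_one h
        apply heP
        fin_cases i <;> simp [hP]
      simp [hg, hvan e hwe]
  have hPne : (Finsupp.single (0 : Fin 2) 1) ≠ Finsupp.single 1 1 := by
    intro h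
    have := DFunLike.congr_fun h 0
    simp [Finsupp.single_apply] at this
  have hlt : ∀ i : Fin 2, Finsupp.single i 1 < nf := by
    intro i
    constructor
    · intro j
      have : nf j = wt d + 1 := rfl
      rw [this, hd, Finsupp.single_apply]
      split <;> omega
    · intro hle
      have := hle i
      have h1 : (Finsupp.single i 1) i = 1 := by simp
      have h2 : nf i = wt d + 1 := rfl
      omega
  have hcoeffT : ∀ i : Fin 2, T.coeff (Finsupp.single i 1)
      = MvPowerSeries.coeff (Finsupp.single i 1) F := by
    intro i
    rw [hT, MvPowerSeries.coeff_trunc, if_pos (hlt i)]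
  have hgval : ∀ i : Fin 2, g (Finsupp.single i 1)
      = MvPowerSeries.coeff (Finsupp.single i 1) F * MvPowerSeries.coeff d (a i) := by
    intro i
    rw [hg]
    simp only [hcoeffT i]
    congr 1
    rw [Finsupp.support_single_ne_zero _ one_ne_zero]
    simp
  rw [h1, hsum, hP, Finset.sum_pair hPne, hgval 0, hgval 1]

/-! ### one-variable substitution -/

theorem coeff_psubst (a f : PowerSeries R) (n : ℕ) :
    PowerSeries.coeff n (psubst a f) =
      PowerSeries.coeff n (Polynomial.eval₂ (PowerSeries.C) a (trunc (n + 1) f)) := by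
  have h1 : PowerSeries.coeff n (psubst a f) = psubst a f (Finsupp.single () n) := rfl
  rw [h1]
  simp only [psubst]
  rw [wt_single]
  rfl

theorem coeff_eval₂_eq_zero {a : PowerSeries R} (ha : constantCoeff a = 0)
    {p : Polynomial R} {N : ℕ} (hp : ∀ k, k < N → p.coeff k = 0) {n : ℕ} (hn : n < N) :
    PowerSeries.coeff n (p.eval₂ (PowerSeries.C) a) = 0 := by
  rw [Polynomial.eval₂_eq_sum, Polynomial.sum_def, map_sum]
  apply Finset.sum_eq_zero
  intro k hk
  have hkN : N ≤ k := by
    by_contra hlt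
    exact (Polynomial.mem_support_iff.mp hk) (hp k (by omega))
  rw [coeff_C_mul]
  have hdvd : (X : PowerSeries R) ^ k ∣ a ^ k :=
    pow_dvd_pow_of_dvd (X_dvd_iff.mpr ha) k
  rw [X_pow_dvd_iff.mp hdvd n (by omega), mul_zero]

theorem coeff_psubst_trunc {a : PowerSeries R} (ha : constantCoeff a = 0)
    (f : PowerSeries R) {n N : ℕ} (hn : n < N) :
    PowerSeries.coeff n (psubst a f) =
      PowerSeries.coeff n (Polynomial.eval₂ (PowerSeries.C) a (trunc N f)) := by
  rw [coeff_psubst]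
  have key : PowerSeries.coeff n (Polynomial.eval₂ (PowerSeries.C) a
      (trunc N f - trunc (n + 1) f)) = 0 := by
    apply coeff_eval₂_eq_zero ha (N := n + 1) _ (by omega)
    intro k hk
    rw [Polynomial.coeff_sub, coeff_trunc, coeff_trunc, if_pos (by omega), if_pos (by omega),
      sub_self]
  rw [Polynomial.eval₂_sub, map_sub] at key
  exact (sub_eq_zero.mp key).symm

theorem psubst_dvd_sub {a : PowerSeries R} (ha : constantCoeff a = 0)
    (f : PowerSeries R) (N : ℕ) :
    (X : PowerSeries R) ^ N ∣
      psubst a f - Polynomial.eval₂ (PowerSeries.C) a (trunc N f) := by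
  rw [X_pow_dvd_iff]
  intro m hm
  rw [map_sub, coeff_psubst_trunc ha f hm, sub_self]

theorem coeff_psubst_sum {a : PowerSeries R} (ha : constantCoeff a = 0)
    (f : PowerSeries R) {n N : ℕ} (hn : n < N) :
    PowerSeries.coeff n (psubst a f) =
      ∑ k ∈ Finset.range N, PowerSeries.coeff k f * PowerSeries.coeff n (a ^ k) := by
  rw [coeff_psubst_trunc ha f hn]
  have hdeg : (trunc N f).natDegree < N := by
    rcases eq_or_ne (trunc N f) 0 with h | h
    · rw [h]; simpa using by omega
    · exact Polynomial.natDegree_lt_iff_degree_lt h |>.mpr (degree_trunc_lt f N)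
  rw [Polynomial.eval₂_eq_sum_range' _ hdeg, map_sum]
  apply Finset.sum_congr rfl
  intro k hk
  rw [coeff_C_mul, coeff_trunc, if_pos (Finset.mem_range.mp hk)]

theorem psubst_add (a f g : PowerSeries R) :
    psubst a (f + g) = psubst a f + psubst a g := by
  ext n
  rw [map_add, coeff_psubst, coeff_psubst, coeff_psubst, map_add (trunc (n + 1)), Polynomial.eval₂_add,
    map_add]

theorem psubst_one (a : PowerSeries R) : psubst a (1 : PowerSeries R) = 1 := by
  ext n
  rw [coeff_psubst, trunc_one, Polynomial.eval₂_one]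

theorem psubst_zero (a : PowerSeries R) : psubst a (0 : PowerSeries R) = 0 := by
  ext n
  rw [coeff_psubst, map_zero (trunc (n + 1)), Polynomial.eval₂_zero, map_zero]

theorem psubst_mul {a : PowerSeries R} (ha : constantCoeff a = 0) (f g : PowerSeries R) :
    psubst a (f * g) = psubst a f * psubst a g := by
  ext n
  set N := n + 1 with hN
  have hn : n < N := by omega
  rw [coeff_psubst_trunc ha (f * g) hn]
  have step2 : PowerSeries.coeff n (Polynomial.eval₂ (PowerSeries.C) a (trunc N (f * g)))
      = PowerSeries.coeff n
        (Polynomial.eval₂ (PowerSeries.C) a (trunc N f * trunc N g)) := by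
    have key : PowerSeries.coeff n (Polynomial.eval₂ (PowerSeries.C) a
        (trunc N (f * g) - trunc N f * trunc N g)) = 0 := by
      apply coeff_eval₂_eq_zero ha (N := N) _ hn
      intro k hk
      rw [Polynomial.coeff_sub, coeff_trunc, if_pos hk, Polynomial.coeff_mul,
        PowerSeries.coeff_mul, sub_eq_zero]
      apply Finset.sum_congr rfl
      rintro ⟨i, j⟩ hij
      have hij' : i + j = k := Finset.HasAntidiagonal.mem_antidiagonal.mp hij
      rw [coeff_trunc, coeff_trunc, if_pos (by omega), if_pos (by omega)]
    rw [Polynomial.eval₂_sub, map_sub, sub_eq_zero] at key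
    exact key
  rw [step2, Polynomial.eval₂_mul]
  obtain ⟨s, hs⟩ := psubst_dvd_sub ha f N
  obtain ⟨t, ht⟩ := psubst_dvd_sub ha g N
  have hf' : psubst a f = Polynomial.eval₂ (PowerSeries.C) a (trunc N f) + X ^ N * s := by
    rw [← hs]; ring
  have hg' : psubst a g = Polynomial.eval₂ (PowerSeries.C) a (trunc N g) + X ^ N * t := by
    rw [← ht]; ring
  rw [hf', hg']
  have expand : (Polynomial.eval₂ (PowerSeries.C) a (trunc N f) + X ^ N * s) *
      (Polynomial.eval₂ (PowerSeries.C) a (trunc N g) + X ^ N * t)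
      = Polynomial.eval₂ (PowerSeries.C) a (trunc N f) *
        Polynomial.eval₂ (PowerSeries.C) a (trunc N g)
        + X ^ N * (s * Polynomial.eval₂ (PowerSeries.C) a (trunc N g)
          + Polynomial.eval₂ (PowerSeries.C) a (trunc N f) * t + X ^ N * (s * t)) := by
    ring
  rw [expand, map_add]
  have : PowerSeries.coeff n ((X : PowerSeries R) ^ N *
      (s * Polynomial.eval₂ (PowerSeries.C) a (trunc N g)
        + Polynomial.eval₂ (PowerSeries.C) a (trunc N f) * t + X ^ N * (s * t))) = 0 :=
    X_pow_dvd_iff.mp (Dvd.intro _ rfl) n hn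
  rw [this, add_zero]

theorem psubst_X {a : PowerSeries R} (ha : constantCoeff a = 0) :
    psubst a (X : PowerSeries R) = a := by
  ext n
  rw [coeff_psubst_trunc ha X (show n < n + 2 by omega), trunc_X, Polynomial.eval₂_X]

/-- substitution as a ring homomorphism -/
def sigma {a : PowerSeries R} (ha : constantCoeff a = 0) :
    PowerSeries R →+* PowerSeries R where
  toFun := psubst a
  map_one' := psubst_one a
  map_mul' := psubst_mul ha
  map_zero' := psubst_zero a
  map_add' := psubst_add a

@[simp] theorem sigma_apply {a : PowerSeries R} (ha : constantCoeff a = 0)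
    (f : PowerSeries R) : sigma ha f = psubst a f := rfl

/-! ### power series of order exactly 2 -/

section U

variable {u : PowerSeries R} (hu0 : PowerSeries.coeff 0 u = 0)
  (hu1 : PowerSeries.coeff 1 u = 0)

include hu0 hu1

theorem X_sq_dvd : (X : PowerSeries R) ^ 2 ∣ u := by
  rw [X_pow_dvd_iff]
  intro m hm
  interval_cases m
  · exact hu0
  · exact hu1

theorem coeff_u_pow_eq_zero {k n : ℕ} (hn : n < 2 * k) :
    PowerSeries.coeff n (u ^ k) = 0 := by
  have : (X : PowerSeries R) ^ (2 * k) ∣ u ^ k := by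
    rw [pow_mul]
    exact pow_dvd_pow_of_dvd (X_sq_dvd hu0 hu1) k
  exact X_pow_dvd_iff.mp this n hn

omit hu1 in
theorem hu_const : constantCoeff u = 0 := by
  rw [← coeff_zero_eq_constantCoeff]
  exact hu0

theorem coeff_u_pow_self (k : ℕ) :
    PowerSeries.coeff (2 * k) (u ^ k) = (PowerSeries.coeff 2 u) ^ k := by
  induction k with
  | zero => simp
  | succ k ih =>
    rw [pow_succ, PowerSeries.coeff_mul]
    rw [Finset.sum_eq_single (2 * k, 2)]
    · rw [ih, pow_succ]
    · rintro ⟨i, j⟩ hij hne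
      have hij' : i + j = 2 * (k + 1) := Finset.HasAntidiagonal.mem_antidiagonal.mp hij
      rcases Nat.lt_or_ge i (2 * k) with h | h
      · rw [coeff_u_pow_eq_zero hu0 hu1 h, zero_mul]
      · have hj : j < 2 := by
          rcases Nat.lt_or_ge j 2 with h2 | h2
          · exact h2
          · exfalso; apply hne
            have : i = 2 * k := by omega
            subst this
            simp [Prod.ext_iff]; omega
        interval_cases j
        · rw [hu0, mul_zero]
        · rw [hu1, mul_zero]
    · intro hmem
      exfalso
      exact hmem (Finset.HasAntidiagonal.mem_antidiagonal.mpr (by omega))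

/-- extended sum formula: valid as soon as `n < 2 * N` -/
theorem coeff_psubst_sum' (f : PowerSeries R) {n N : ℕ} (hn : n < 2 * N) :
    PowerSeries.coeff n (psubst u f) =
      ∑ k ∈ Finset.range N, PowerSeries.coeff k f * PowerSeries.coeff n (u ^ k) := by
  set M := max N (n + 1) with hM
  rw [coeff_psubst_sum (hu_const hu0) f (show n < M by omega)]
  symm
  apply Finset.sum_subset (Finset.range_subset_range.mpr (by omega))
  intro k hkM hkN
  have hk : N ≤ k := by
    simp only [Finset.mem_range] at hkM hkN
    omega
  rw [coeff_u_pow_eq_zero hu0 hu1 (by omega), mul_zero]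

theorem coeff_psubst_even (f : PowerSeries R) (n : ℕ)
    (hf : ∀ k, k < n → PowerSeries.coeff k f = 0) :
    PowerSeries.coeff (2 * n) (psubst u f) =
      (PowerSeries.coeff 2 u) ^ n * PowerSeries.coeff n f := by
  rw [coeff_psubst_sum' hu0 hu1 f (show 2 * n < 2 * (n + 1) by omega),
    Finset.sum_range_succ]
  rw [Finset.sum_eq_zero, zero_add, coeff_u_pow_self hu0 hu1, mul_comm]
  intro k hk
  rw [hf k (Finset.mem_range.mp hk), zero_mul]

theorem coeff_psubst_odd (f : PowerSeries R) (n : ℕ)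
    (hf : ∀ k, k ≤ n → PowerSeries.coeff k f = 0) :
    PowerSeries.coeff (2 * n + 1) (psubst u f) = 0 := by
  rw [coeff_psubst_sum' hu0 hu1 f (show 2 * n + 1 < 2 * (n + 2) by omega)]
  apply Finset.sum_eq_zero
  intro k hk
  rcases Nat.lt_or_ge k (n + 1) with h | h
  · rw [hf k (by omega), zero_mul]
  · rw [coeff_u_pow_eq_zero hu0 hu1 (by omega), mul_zero]

end U

/-! ### division with remainder by an order-2 series with `u₂ = -1` -/

/-- coefficients of the quotient in division by `u`. -/
def divQ (u h : PowerSeries R) : ℕ → R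
  | m => (∑ i ∈ (Finset.range m).attach,
        divQ u h i.1 * PowerSeries.coeff (m + 2 - i.1) u) - PowerSeries.coeff (m + 2) h
  termination_by m => m
  decreasing_by exact Finset.mem_range.mp i.2

theorem divQ_def (u h : PowerSeries R) (m : ℕ) :
    divQ u h m = (∑ i ∈ Finset.range m,
        divQ u h i * PowerSeries.coeff (m + 2 - i) u) - PowerSeries.coeff (m + 2) h := by
  rw [divQ]
  congr 1
  rw [← Finset.sum_attach (Finset.range m)
    (fun i => divQ u h i * PowerSeries.coeff (m + 2 - i) u)]

section U2

variable {u : PowerSeries R} (hu0 : PowerSeries.coeff 0 u = 0)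
  (hu1 : PowerSeries.coeff 1 u = 0) (hu2 : PowerSeries.coeff 2 u = -1)

include hu0 hu1 hu2

theorem div_spec (h : PowerSeries R) :
    h = u * PowerSeries.mk (divQ u h)
      + PowerSeries.C (PowerSeries.coeff 0 h)
      + PowerSeries.C (PowerSeries.coeff 1 h) * X := by
  have hccu : constantCoeff u = 0 := by
    rw [← PowerSeries.coeff_zero_eq_constantCoeff]; exact hu0
  ext n
  match n with
  | 0 =>
    simp [PowerSeries.coeff_zero_eq_constantCoeff, map_mul, hccu]
  | 1 =>
    rw [map_add, map_add, PowerSeries.coeff_mul,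
      Finset.Nat.sum_antidiagonal_eq_sum_range_succ_mk]
    rw [Finset.sum_range_succ', Finset.sum_range_succ']
    simp [hu0, hu1, PowerSeries.coeff_C]
  | (m + 2) =>
    rw [map_add, map_add, PowerSeries.coeff_mul,
      Finset.Nat.sum_antidiagonal_eq_sum_range_succ_mk]
    rw [Finset.sum_range_succ', Finset.sum_range_succ', Finset.sum_range_succ']
    simp only [hu0, hu1, zero_mul, add_zero]
    have hideq : ∀ i ∈ Finset.range m,
        PowerSeries.coeff (i + 1 + 1 + 1) u *
            PowerSeries.coeff (m + 2 - (i + 1 + 1 + 1)) (PowerSeries.mk (divQ u h))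
          = (fun j => divQ u h j * PowerSeries.coeff (m + 2 - j) u) (m - 1 - i) := by
      intro i hi
      have him : i < m := Finset.mem_range.mp hi
      simp only [PowerSeries.coeff_mk]
      have h1 : m + 2 - (i + 1 + 1 + 1) = m - 1 - i := by omega
      have h2 : m + 2 - (m - 1 - i) = i + 1 + 1 + 1 := by omega
      rw [h1, h2, mul_comm]
    rw [Finset.sum_congr rfl hideq,
      Finset.sum_range_reflect (fun j => divQ u h j * PowerSeries.coeff (m + 2 - j) u) m]
    have hzero1 : PowerSeries.coeff (m + 2)
        (PowerSeries.C (PowerSeries.coeff 0 h)) = 0 := by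
      simp [PowerSeries.coeff_C]
    have hzero2 : PowerSeries.coeff (m + 2)
        (PowerSeries.C (PowerSeries.coeff 1 h) * X) = 0 := by
      rw [PowerSeries.coeff_succ_mul_X]
      simp [PowerSeries.coeff_C]
    rw [hzero1, hzero2]
    simp only [PowerSeries.coeff_mk, hu2]
    have hm2 : m + 2 - (0 + 1 + 1) = m := by omega
    rw [hm2, divQ_def u h m]
    ring

theorem phi_surj (h : PowerSeries R) :
    ∃ a b : PowerSeries R, h = psubst u a + psubst u b * X := by
  let hs : ℕ → PowerSeries R := fun n =>
    Nat.rec h (fun _ prev => PowerSeries.mk (divQ u prev)) n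
  have hs_succ : ∀ n, hs (n + 1) = PowerSeries.mk (divQ u (hs n)) := fun n => rfl
  set a : PowerSeries R := PowerSeries.mk fun n => PowerSeries.coeff 0 (hs n) with ha
  set b : PowerSeries R := PowerSeries.mk fun n => PowerSeries.coeff 1 (hs n) with hb
  refine ⟨a, b, ?_⟩
  have key2 : ∀ N, h - (∑ n ∈ Finset.range N,
      (PowerSeries.C (PowerSeries.coeff 0 (hs n))
        + PowerSeries.C (PowerSeries.coeff 1 (hs n)) * X) * u ^ n)
      = u ^ N * hs N := by
    intro N
    induction N with
    | zero => simp [hs]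
    | succ N ih =>
      have hstep := div_spec hu0 hu1 hu2 (hs N)
      rw [← hs_succ N] at hstep
      rw [Finset.sum_range_succ, ← sub_sub, ih, pow_succ]
      linear_combination (u ^ N) * hstep
  have dvd1 : ∀ N : ℕ, (X : PowerSeries R) ^ (2 * N) ∣
      h - (psubst u a + psubst u b * X) := by
    intro N
    have hXu : (X : PowerSeries R) ^ (2 * N) ∣ u ^ N := by
      rw [pow_mul]
      exact pow_dvd_pow_of_dvd (X_sq_dvd hu0 hu1) N
    have d1 : (X : PowerSeries R) ^ (2 * N) ∣ u ^ N * hs N := hXu.mul_right _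
    have d2 : (X : PowerSeries R) ^ (2 * N) ∣ psubst u a
        - ∑ n ∈ Finset.range N, PowerSeries.C (PowerSeries.coeff 0 (hs n)) * u ^ n := by
      rw [X_pow_dvd_iff]
      intro m hm
      rw [map_sub, coeff_psubst_sum' hu0 hu1 a hm, map_sum, sub_eq_zero]
      apply Finset.sum_congr rfl
      intro k hk
      rw [coeff_C_mul, ha, PowerSeries.coeff_mk]
    have d3 : (X : PowerSeries R) ^ (2 * N) ∣ psubst u b
        - ∑ n ∈ Finset.range N, PowerSeries.C (PowerSeries.coeff 1 (hs n)) * u ^ n := by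
      rw [X_pow_dvd_iff]
      intro m hm
      rw [map_sub, coeff_psubst_sum' hu0 hu1 b hm, map_sum, sub_eq_zero]
      apply Finset.sum_congr rfl
      intro k hk
      rw [coeff_C_mul, hb, PowerSeries.coeff_mk]
    have hrewrite : h - (psubst u a + psubst u b * X)
        = (u ^ N * hs N)
          - (psubst u a - ∑ n ∈ Finset.range N,
              PowerSeries.C (PowerSeries.coeff 0 (hs n)) * u ^ n)
          - (psubst u b - ∑ n ∈ Finset.range N,
              PowerSeries.C (PowerSeries.coeff 1 (hs n)) * u ^ n) * X := by
      rw [← key2 N]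
      have hsplit : ∑ n ∈ Finset.range N,
          (PowerSeries.C (PowerSeries.coeff 0 (hs n))
            + PowerSeries.C (PowerSeries.coeff 1 (hs n)) * X) * u ^ n
          = (∑ n ∈ Finset.range N, PowerSeries.C (PowerSeries.coeff 0 (hs n)) * u ^ n)
            + (∑ n ∈ Finset.range N, PowerSeries.C (PowerSeries.coeff 1 (hs n)) * u ^ n)
              * X := by
        rw [Finset.sum_mul, ← Finset.sum_add_distrib]
        apply Finset.sum_congr rfl
        intros; ring
      rw [hsplit]
      ring
    rw [hrewrite]
    exact dvd_sub (dvd_sub d1 d2) (d3.mul_right X)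
  have hfinal : h - (psubst u a + psubst u b * X) = 0 := by
    ext m
    rw [map_zero]
    exact X_pow_dvd_iff.mp (dvd1 (m + 1)) m (by omega)
  exact (sub_eq_zero.mp hfinal)

theorem phi_inj {a b : PowerSeries R} (hab : psubst u a + psubst u b * X = 0) :
    a = 0 ∧ b = 0 := by
  have main : ∀ n, PowerSeries.coeff n a = 0 ∧ PowerSeries.coeff n b = 0 := by
    intro n
    induction n using Nat.strong_induction_on with
    | _ n ih =>
    have hunit : (-1 : R) ^ n * (-1) ^ n = 1 := by
      rw [← pow_add, ← two_mul, pow_mul, neg_one_sq, one_pow]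
    have hae : PowerSeries.coeff (2 * n) (psubst u a)
        = (-1) ^ n * PowerSeries.coeff n a := by
      rw [coeff_psubst_even hu0 hu1 a n (fun k hk => (ih k hk).1), hu2]
    have hbe : PowerSeries.coeff (2 * n) (psubst u b)
        = (-1) ^ n * PowerSeries.coeff n b := by
      rw [coeff_psubst_even hu0 hu1 b n (fun k hk => (ih k hk).2), hu2]
    have h2n := congrArg (PowerSeries.coeff (2 * n)) hab
    rw [map_add, map_zero] at h2n
    have hbx : PowerSeries.coeff (2 * n) (psubst u b * X) = 0 := by
      match n with
      | 0 => simpa using PowerSeries.coeff_zero_mul_X (psubst u b)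
      | (m + 1) =>
        have h21 : 2 * (m + 1) = (2 * m + 1) + 1 := by ring
        rw [h21, PowerSeries.coeff_succ_mul_X]
        exact coeff_psubst_odd hu0 hu1 b m (fun k hk => (ih k (by omega)).2)
    rw [hbx, add_zero, hae] at h2n
    have han : PowerSeries.coeff n a = 0 := by
      have : PowerSeries.coeff n a
          = ((-1 : R) ^ n * (-1) ^ n) * PowerSeries.coeff n a := by
        rw [hunit, one_mul]
      rw [this, mul_assoc, h2n, mul_zero]
    have h2n1 := congrArg (PowerSeries.coeff (2 * n + 1)) hab
    rw [map_add, map_zero] at h2n1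
    have hax : PowerSeries.coeff (2 * n + 1) (psubst u a) = 0 := by
      apply coeff_psubst_odd hu0 hu1 a n
      intro k hk
      rcases Nat.lt_or_ge k n with h | h
      · exact (ih k h).1
      · have : k = n := by omega
        rw [this]; exact han
    rw [hax, zero_add, PowerSeries.coeff_succ_mul_X, hbe] at h2n1
    have hbn : PowerSeries.coeff n b = 0 := by
      have : PowerSeries.coeff n b
          = ((-1 : R) ^ n * (-1) ^ n) * PowerSeries.coeff n b := by
        rw [hunit, one_mul]
      rw [this, mul_assoc, h2n1, mul_zero]
    exact ⟨han, hbn⟩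
  constructor
  · ext n; rw [map_zero]; exact (main n).1
  · ext n; rw [map_zero]; exact (main n).2

end U2

/-! ### extraction of the linear coefficient of the formal inverse -/

theorem iota_coeff_one (F : MvPowerSeries (Fin 2) R) (hF : IsFGL F)
    (ι : PowerSeries R) (hι : IsFormalInverse F ι) :
    PowerSeries.coeff 1 ι = -1 := by
  have hcoe : ∀ f : PowerSeries R,
      MvPowerSeries.coeff (Finsupp.single () 1) f = PowerSeries.coeff 1 f :=
    fun _ => rfl
  -- F₁₀ = 1 from zero_right
  have h10 : MvPowerSeries.coeff (Finsupp.single 0 1) F = 1 := by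
    have ha : ∀ i : Fin 2, MvPowerSeries.constantCoeff
        ((![MvPowerSeries.X 0, 0] : Fin 2 → MvPowerSeries (Fin 2) R) i) = 0 := by
      intro i
      fin_cases i <;> simp [MvPowerSeries.constantCoeff_X]
    have := congrArg (MvPowerSeries.coeff (Finsupp.single (0 : Fin 2) 1)) hF.zero_right
    rw [coeff_msubst_wt_one _ ha F _ (wt_single _ _)] at this
    simpa [MvPowerSeries.coeff_X] using this
  -- F₀₁ = 1 from zero_left
  have h01 : MvPowerSeries.coeff (Finsupp.single 1 1) F = 1 := by
    have ha : ∀ i : Fin 2, MvPowerSeries.constantCoeff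
        ((![0, MvPowerSeries.X 1] : Fin 2 → MvPowerSeries (Fin 2) R) i) = 0 := by
      intro i
      fin_cases i <;> simp [MvPowerSeries.constantCoeff_X]
    have := congrArg (MvPowerSeries.coeff (Finsupp.single (1 : Fin 2) 1)) hF.zero_left
    rw [coeff_msubst_wt_one _ ha F _ (wt_single _ _)] at this
    simpa [MvPowerSeries.coeff_X] using this
  -- the relation from F(X, ι) = 0
  have ha : ∀ i : Fin 2, MvPowerSeries.constantCoeff
      ((![(PowerSeries.X : PowerSeries R), ι] : Fin 2 → MvPowerSeries Unit R) i) = 0 := by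
    intro i
    fin_cases i
    · show MvPowerSeries.constantCoeff (MvPowerSeries.X ()) = 0
      exact MvPowerSeries.constantCoeff_X ()
    · exact hι.1
  have hzero := congrArg (MvPowerSeries.coeff (Finsupp.single () 1)) hι.2
  rw [coeff_msubst_wt_one _ ha F _ (wt_single _ _)] at hzero
  simp only [Matrix.cons_val_zero, Matrix.cons_val_one, Matrix.head_cons, map_zero] at hzero
  rw [h10, h01, hcoe ι, one_mul, one_mul] at hzero
  have hX1 : MvPowerSeries.coeff (Finsupp.single () 1)
      (PowerSeries.X : PowerSeries R) = 1 := by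
    classical
    rw [show (PowerSeries.X : PowerSeries R) = MvPowerSeries.X () from rfl,
      MvPowerSeries.coeff_X, if_pos rfl]
  rw [hX1] at hzero
  linear_combination hzero

end StmtThreeAux

end StmtThreeAux

/-- With `G` the unique power series satisfying `X + ι(X) = G(X·ι(X))`, the
`R[[U]]`-algebra map `R[[U]][T]/(T² − G(U)T + U) → R[[X]]`, `U ↦ X·ι(X)`, `T ↦ X`, is well
defined (i.e. `X² − G(X·ι(X))·X + X·ι(X) = 0`) and bijective; in particular `R[[X]]` is a
finite module over the image of `R[[U]]`. -/
theorem stmt_3 {R : Type*} [CommRing R] (F : MvPowerSeries (Fin 2) R) (hF : IsFGL F)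
    (ι : PowerSeries R) (hι : IsFormalInverse F ι)
    (G : PowerSeries R) (hG : psubst (PowerSeries.X * ι) G = PowerSeries.X + ι) :
    (PowerSeries.X ^ 2 - psubst (PowerSeries.X * ι) G * PowerSeries.X
        + PowerSeries.X * ι = 0) ∧
    ∃ σ : PowerSeries R →+* PowerSeries R,
      (∀ h : PowerSeries R, σ h = psubst (PowerSeries.X * ι) h) ∧
      (∃ ψ : AdjoinRoot (Polynomial.X ^ 2 - Polynomial.C G * Polynomial.X
            + Polynomial.C (PowerSeries.X) : Polynomial (PowerSeries R)) →+* PowerSeries R,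
        (∀ h : PowerSeries R, ψ (AdjoinRoot.of _ h) = σ h) ∧
        ψ (AdjoinRoot.root _) = PowerSeries.X ∧
        Function.Bijective ψ) ∧
      σ.Finite := by
  classical
  open StmtThreeAux PowerSeries in
  set u : PowerSeries R := PowerSeries.X * ι with hu
  have hι1 : PowerSeries.coeff 1 ι = -1 := iota_coeff_one F hF ι hι
  have hu0 : PowerSeries.coeff 0 u = 0 := by
    rw [hu, PowerSeries.coeff_zero_eq_constantCoeff, map_mul, PowerSeries.constantCoeff_X,
      zero_mul]
  have hu1 : PowerSeries.coeff 1 u = 0 := by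
    rw [hu, show (1 : ℕ) = 0 + 1 from rfl, PowerSeries.coeff_succ_X_mul,
      PowerSeries.coeff_zero_eq_constantCoeff]
    exact hι.1
  have hu2 : PowerSeries.coeff 2 u = -1 := by
    rw [hu, show (2 : ℕ) = 1 + 1 from rfl, PowerSeries.coeff_succ_X_mul]
    exact hι1
  have huc : PowerSeries.constantCoeff u = 0 := by
    rw [← PowerSeries.coeff_zero_eq_constantCoeff]; exact hu0
  constructor
  · rw [hG]; ring
  set p : Polynomial (PowerSeries R) :=
    Polynomial.X ^ 2 - Polynomial.C G * Polynomial.X + Polynomial.C (PowerSeries.X)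
    with hp
  have hσG : sigma huc G = PowerSeries.X + ι := by rw [sigma_apply]; exact hG
  have hσX : sigma huc PowerSeries.X = u := by rw [sigma_apply]; exact psubst_X huc
  have hroot : Polynomial.eval₂ (sigma huc) PowerSeries.X p = 0 := by
    rw [hp]
    simp only [Polynomial.eval₂_add, Polynomial.eval₂_sub, Polynomial.eval₂_mul,
      Polynomial.eval₂_pow, Polynomial.eval₂_X, Polynomial.eval₂_C]
    rw [hσG, hσX, hu]
    ring
  set ψ : AdjoinRoot p →+* PowerSeries R := AdjoinRoot.lift (sigma huc) PowerSeries.X hroot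
    with hψ
  have hψ_of : ∀ h : PowerSeries R, ψ (AdjoinRoot.of p h) = sigma huc h := by
    intro h
    rw [hψ]
    exact AdjoinRoot.lift_of hroot
  have hψ_root : ψ (AdjoinRoot.root p) = PowerSeries.X := by
    rw [hψ]
    exact AdjoinRoot.lift_root hroot
  have hψ_mk : ∀ q : Polynomial (PowerSeries R),
      ψ (AdjoinRoot.mk p q) = Polynomial.eval₂ (sigma huc) PowerSeries.X q := by
    intro q
    rw [hψ]
    exact AdjoinRoot.lift_mk hroot q
  have hsurj : Function.Surjective ψ := by
    intro h
    obtain ⟨a, b, hab⟩ := phi_surj hu0 hu1 hu2 h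
    refine ⟨AdjoinRoot.mk p (Polynomial.C a + Polynomial.C b * Polynomial.X), ?_⟩
    rw [hψ_mk]
    simp only [Polynomial.eval₂_add, Polynomial.eval₂_mul, Polynomial.eval₂_X,
      Polynomial.eval₂_C]
    rw [sigma_apply, sigma_apply]
    exact hab.symm
  have hinj : Function.Injective ψ := by
    rcases subsingleton_or_nontrivial R with hs | hn
    · haveI : Subsingleton (PowerSeries R) :=
        ⟨fun f g => by ext n; exact Subsingleton.elim _ _⟩
      haveI : Subsingleton (AdjoinRoot p) := by
        apply subsingleton_of_zero_eq_one
        rw [← map_one (AdjoinRoot.of p), Subsingleton.elim (1 : PowerSeries R) 0, map_zero]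
      exact fun x y _ => Subsingleton.elim x y
    · have hmonic : p.Monic := by
        rw [hp]
        monicity!
      have hdegp : p.degree = 2 := by
        rw [hp]
        compute_degree!
      rw [injective_iff_map_eq_zero]
      intro z hz
      obtain ⟨q, rfl⟩ := AdjoinRoot.mk_surjective z
      have hzr : AdjoinRoot.mk p q = AdjoinRoot.mk p (q %ₘ p) := by
        conv_lhs => rw [← Polynomial.modByMonic_add_div q p]
        rw [map_add, map_mul, AdjoinRoot.mk_self, zero_mul, add_zero]
      have hdeg : (q %ₘ p).degree < 2 := by
        have := Polynomial.degree_modByMonic_lt q hmonic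
        rwa [hdegp] at this
      have hdeg1 : (q %ₘ p).degree ≤ 1 := by
        by_contra hc
        push_neg at hc
        have h2 : (1 : WithBot ℕ) + 1 ≤ (q %ₘ p).degree := Nat.WithBot.add_one_le_of_lt hc
        rw [show (1 : WithBot ℕ) + 1 = 2 by norm_num] at h2
        exact absurd hdeg (not_lt.mpr h2)
      have hrX : q %ₘ p = Polynomial.C ((q %ₘ p).coeff 1) * Polynomial.X
          + Polynomial.C ((q %ₘ p).coeff 0) :=
        Polynomial.eq_X_add_C_of_degree_le_one hdeg1
      rw [hzr, hψ_mk] at hz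
      rw [hrX] at hz
      simp only [Polynomial.eval₂_add, Polynomial.eval₂_mul, Polynomial.eval₂_X,
        Polynomial.eval₂_C, sigma_apply] at hz
      have hz' : psubst u ((q %ₘ p).coeff 0) + psubst u ((q %ₘ p).coeff 1) * PowerSeries.X
          = 0 := by
        rw [← hz]; ring
      obtain ⟨h0, h1⟩ := phi_inj hu0 hu1 hu2 hz'
      rw [hzr, hrX, h0, h1]
      simp
  have hfin : (sigma huc).Finite := by
    letI : Algebra (PowerSeries R) (PowerSeries R) := (sigma huc).toAlgebra
    letI : Module (PowerSeries R) (PowerSeries R) := Algebra.toModule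
    letI : SMul (PowerSeries R) (PowerSeries R) := Algebra.toSMul
    have halg : ∀ (c x : PowerSeries R), c • x = psubst u c * x := by
      intro c x
      rw [Algebra.smul_def]
      rfl
    have hspan : Submodule.span (PowerSeries R)
        ({1, PowerSeries.X} : Set (PowerSeries R)) = ⊤ := by
      rw [Submodule.eq_top_iff']
      intro h
      obtain ⟨a, b, hab⟩ := phi_surj hu0 hu1 hu2 h
      have h1mem : (1 : PowerSeries R) ∈ ({1, PowerSeries.X} : Set (PowerSeries R)) := by
        simp
      have hXmem : (PowerSeries.X : PowerSeries R)
          ∈ ({1, PowerSeries.X} : Set (PowerSeries R)) := by simp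
      have : h = a • (1 : PowerSeries R) + b • (PowerSeries.X : PowerSeries R) := by
        rw [halg, halg, mul_one]
        exact hab
      rw [this]
      exact Submodule.add_mem _
        (Submodule.smul_mem _ a (Submodule.subset_span h1mem))
        (Submodule.smul_mem _ b (Submodule.subset_span hXmem))
    have hmf : Module.Finite (PowerSeries R) (PowerSeries R) := by
      refine ⟨⟨({1, PowerSeries.X} : Finset (PowerSeries R)), ?_⟩⟩
      rw [← hspan]
      congr 1
      simp
    exact hmf
  exact ⟨sigma huc, fun h => rfl, ⟨ψ, hψ_of, hψ_root, hinj, hsurj⟩, hfin⟩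
end

section
/- Let A = ℤ[1/2][ε, a]/(ε² − 1) be the polynomial ring in a over ℤ[1/2][ε]/(ε²−1). Then the ideal of A generated by the two elements a² − 832 + 768ε and (a − 40)(ε − 1) is equal to the ideal generated by the two elements (a − 40)(1 − ε) and (a − 8)(a + 8)(1 + ε). (A witness for one inclusion is the identity a² − 832 + 768ε = ((a−40)e + (a−8)f)((a−40)e + (a+8)f) + 80(a−40)e, where e = (1−ε)/2 and f = (1+ε)/2 are the idempotents of ℤ[1/2][ε]/(ε²−1).) -/
noncomputable section

/-- The ring `ℤ[1/2]`. -/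
abbrev Zhalf : Type := Localization.Away (2 : ℤ)

/-- The ring `ℤ[1/2][ε]/(ε² − 1)`. -/
abbrev Zeps : Type := AdjoinRoot (Polynomial.X ^ 2 - 1 : Polynomial Zhalf)

/-- The polynomial ring `A = ℤ[1/2][ε, a]/(ε² − 1)`, a polynomial ring in `a` over
`ℤ[1/2][ε]/(ε²−1)`. -/
abbrev A15 : Type := Polynomial Zeps

/-- The element `ε` of `A`. -/
def ε15 : A15 := Polynomial.C (AdjoinRoot.root (Polynomial.X ^ 2 - 1 : Polynomial Zhalf))

/-- The element `a` of `A`. -/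
def a15 : A15 := Polynomial.X

end

/-- In `A = ℤ[1/2][ε,a]/(ε²−1)`, the ideal generated by `a² − 832 + 768ε`
and `(a − 40)(ε − 1)` equals the ideal generated by `(a − 40)(1 − ε)` and
`(a − 8)(a + 8)(1 + ε)`. -/
theorem stmt_15 :
    Ideal.span {a15 ^ 2 - 832 + 768 * ε15, (a15 - 40) * (ε15 - 1)} =
      Ideal.span {(a15 - 40) * (1 - ε15), (a15 - 8) * (a15 + 8) * (1 + ε15)} := by
  have hε : ε15 ^ 2 = 1 := by
    have h : (AdjoinRoot.root (Polynomial.X ^ 2 - 1 : Polynomial Zhalf)) ^ 2 - 1 = 0 := by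
      have := AdjoinRoot.eval₂_root (Polynomial.X ^ 2 - 1 : Polynomial Zhalf)
      simpa using this
    have hr : (AdjoinRoot.root (Polynomial.X ^ 2 - 1 : Polynomial Zhalf)) ^ 2 = 1 := by
      linear_combination h
    unfold ε15
    rw [← Polynomial.C_pow]
    simp only [hr]
    exact Polynomial.C_1
  obtain ⟨y, hy⟩ : ∃ y : Zhalf, 2 * y = 1 := by
    have h : IsUnit (2 : Zhalf) := by
      have := IsLocalization.map_units Zhalf (⟨2, Submonoid.mem_powers 2⟩ : Submonoid.powers (2:ℤ))
      simpa using this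
    obtain ⟨u, hu⟩ := h
    exact ⟨u.inv, by rw [← hu]; exact u.mul_inv⟩
  set half : A15 := Polynomial.C (algebraMap Zhalf Zeps y) with hhalf
  have h2 : 2 * half = 1 := by
    rw [hhalf]
    calc (2 : A15) * Polynomial.C (algebraMap Zhalf Zeps y)
        = Polynomial.C (algebraMap Zhalf Zeps (2 * y)) := by
          rw [map_mul, map_mul]
          congr 1
      _ = 1 := by rw [hy]; simp
  apply le_antisymm <;> rw [Ideal.span_le] <;> rintro x (rfl | rfl)
  · rw [SetLike.mem_coe, Ideal.mem_span_pair]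
    exact ⟨half * (a15 + 40), half, by linear_combination (a15 ^ 2 - 832 + 768 * ε15) * h2⟩
  · rw [SetLike.mem_coe, Ideal.mem_span_pair]
    exact ⟨-1, 0, by ring⟩
  · rw [SetLike.mem_coe, Ideal.mem_span_pair]
    exact ⟨0, -1, by ring⟩
  · rw [SetLike.mem_coe, Ideal.mem_span_pair]
    exact ⟨1 + ε15, 0, by linear_combination 768 * hε⟩
end

section
/- In the polynomial ring A = ℤ[x,y,z][S]/(S² − 2(x+y)S + (x−y)²), with S' := 2(x+y) − S, the following identity holds in A[t]: (1 + 2(S+z)t + (S−z)²t²)·(1 + 2(S'+z)t + (S'−z)²t²) = 1 + 4(x+y+z)t + [6(x²+y²+z²) + 4(xy+xz+yz)]t² + [4(x³+y³+z³) − 4(x²y+x²z+y²x+y²z+z²x+z²y) + 40xyz]t³ + [(x⁴+y⁴+z⁴) − 4(x³y+x³z+y³x+y³z+z³x+z³y) + 6(x²y²+x²z²+y²z²) + 4(x²yz+xy²z+xyz²)]t⁴. (This computes the formal ternary law of Chow groups as the image under the functor C of the elementary 2-valued formal group of type I, F_t(x,y) = 1 + 2(x+y)t + (x−y)²t², which is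 the image of the additive formal group law under N.) -/
noncomputable section

open MvPolynomial

/-- The base polynomial ring `ℤ[x,y,z]`. -/
abbrev B18 : Type := MvPolynomial (Fin 3) ℤ

/-- The variable `x`. -/
def x18 : B18 := X 0

/-- The variable `y`. -/
def y18 : B18 := X 1

/-- The variable `z`. -/
def z18 : B18 := X 2

/-- The quadratic polynomial `S² − 2(x+y)S + (x−y)²` defining the splitting algebra. -/
def q18 : Polynomial B18 :=
  Polynomial.X ^ 2 - Polynomial.C (2 * (x18 + y18)) * Polynomial.X
    + Polynomial.C ((x18 - y18) ^ 2)

/-- The root `S` in the splitting algebra `A = ℤ[x,y,z][S]/(S² − 2(x+y)S + (x−y)²)`. -/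
def S18 : AdjoinRoot q18 := AdjoinRoot.root q18

/-- The conjugate root `S' = 2(x+y) − S`. -/
def S18' : AdjoinRoot q18 := AdjoinRoot.of q18 (2 * (x18 + y18)) - S18

/-- The image of `z` in the splitting algebra. -/
def zA18 : AdjoinRoot q18 := AdjoinRoot.of q18 z18

end

/-- In `A = ℤ[x,y,z][S]/(S² − 2(x+y)S + (x−y)²)` with `S' = 2(x+y) − S`,
the product `(1 + 2(S+z)t + (S−z)²t²)(1 + 2(S'+z)t + (S'−z)²t²)` equals the displayed
degree-4 polynomial in `t`: this computes the formal ternary law of Chow groups as the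
image under `C` of the elementary 2-valued formal group of type I. -/
theorem stmt_18 :
    (1 + Polynomial.C (2 * (S18 + zA18)) * Polynomial.X
        + Polynomial.C ((S18 - zA18) ^ 2) * Polynomial.X ^ 2)
      * (1 + Polynomial.C (2 * (S18' + zA18)) * Polynomial.X
        + Polynomial.C ((S18' - zA18) ^ 2) * Polynomial.X ^ 2)
    = 1 + Polynomial.C (AdjoinRoot.of q18 (4 * (x18 + y18 + z18))) * Polynomial.X
      + Polynomial.C (AdjoinRoot.of q18 (6 * (x18 ^ 2 + y18 ^ 2 + z18 ^ 2)
          + 4 * (x18 * y18 + x18 * z18 + y18 * z18))) * Polynomial.X ^ 2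
      + Polynomial.C (AdjoinRoot.of q18 (4 * (x18 ^ 3 + y18 ^ 3 + z18 ^ 3)
          - 4 * (x18 ^ 2 * y18 + x18 ^ 2 * z18 + y18 ^ 2 * x18 + y18 ^ 2 * z18
              + z18 ^ 2 * x18 + z18 ^ 2 * y18)
          + 40 * (x18 * y18 * z18))) * Polynomial.X ^ 3
      + Polynomial.C (AdjoinRoot.of q18 ((x18 ^ 4 + y18 ^ 4 + z18 ^ 4)
          - 4 * (x18 ^ 3 * y18 + x18 ^ 3 * z18 + y18 ^ 3 * x18 + y18 ^ 3 * z18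
              + z18 ^ 3 * x18 + z18 ^ 3 * y18)
          + 6 * (x18 ^ 2 * y18 ^ 2 + x18 ^ 2 * z18 ^ 2 + y18 ^ 2 * z18 ^ 2)
          + 4 * (x18 ^ 2 * y18 * z18 + x18 * y18 ^ 2 * z18 + x18 * y18 * z18 ^ 2)))
          * Polynomial.X ^ 4 := by
  have hS : S18 ^ 2 - AdjoinRoot.of q18 (2 * (x18 + y18)) * S18
      + AdjoinRoot.of q18 ((x18 - y18) ^ 2) = 0 := by
    have h : Polynomial.eval₂ (AdjoinRoot.of q18) (AdjoinRoot.root q18)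
        (Polynomial.X ^ 2 - Polynomial.C (2 * (x18 + y18)) * Polynomial.X
          + Polynomial.C ((x18 - y18) ^ 2)) = 0 := AdjoinRoot.eval₂_root q18
    simpa [S18, Polynomial.eval₂_add, Polynomial.eval₂_sub, Polynomial.eval₂_mul,
      Polynomial.eval₂_pow, Polynomial.eval₂_C, Polynomial.eval₂_X] using h
  set CX : Polynomial (AdjoinRoot q18) := Polynomial.C (AdjoinRoot.of q18 x18) with hCX
  set CY : Polynomial (AdjoinRoot q18) := Polynomial.C (AdjoinRoot.of q18 y18) with hCY
  set CZ : Polynomial (AdjoinRoot q18) := Polynomial.C (AdjoinRoot.of q18 z18) with hCZ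
  set CS : Polynomial (AdjoinRoot q18) := Polynomial.C S18 with hCS
  have hSC : CS ^ 2 - 2 * (CX + CY) * CS + (CX - CY) ^ 2 = 0 := by
    have h2 := congrArg (Polynomial.C : AdjoinRoot q18 →+* Polynomial (AdjoinRoot q18)) hS
    simp only [map_add, map_sub, map_mul, map_pow, map_ofNat, map_zero] at h2
    linear_combination h2
  simp only [S18', zA18, map_add, map_sub, map_mul, map_pow, map_ofNat,
    ← hCX, ← hCY, ← hCZ, ← hCS]
  linear_combination ((-2 : Polynomial (AdjoinRoot q18)) * Polynomial.X ^ 2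
    + (12 * CZ - 4 * CX - 4 * CY) * Polynomial.X ^ 3
    + (CS ^ 2 - 2 * (CX + CY) * CS - CX ^ 2 - CY ^ 2 + 2 * CX * CY
        + 4 * CX * CZ + 4 * CY * CZ - 2 * CZ ^ 2) * Polynomial.X ^ 4) * hSC
end
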